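/- For every real number x and every angle θ with 0 < θ < π, the dilogarithm satisfies Im Li₂(e^{x+iθ}) + Im Li₂(e^{-x+iθ}) > (π − θ)·|x|. -/

import Mathlib

open Real

/-- The dilogarithm, defined by `Li₂(z) = ∫ t in 0..1, -log(1 - t z)/t dt`
(principal branch of the complex logarithm). -/
noncomputable def Li2 (z : ℂ) : ℂ :=
  ∫ t in (0:ℝ)..1, -Complex.log (1 - (t : ℂ) * z) / (t : ℂ)

namespace Li2Gt

open Complex MeasureTheory intervalIntegral Filter

lemma ae_ne_zero : ∀ᵐ (t : ℝ), t ≠ 0 := by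
  refine MeasureTheory.ae_iff.2 ?_
  simp only [ne_eq, not_not]
  simpa using measure_singleton (0:ℝ)

/-- Continuous extension of `t ↦ log(1 - t z)/t`. -/
noncomputable def Phi (z : ℂ) (t : ℝ) : ℂ :=
  if t = 0 then -z else Complex.log (1 - (t:ℂ) * z) / (t:ℂ)

lemma Phi_of_ne {z : ℂ} {t : ℝ} (ht : t ≠ 0) :
    Phi z t = Complex.log (1 - (t:ℂ) * z) / (t:ℂ) := if_neg ht

lemma sub_mul_im (z : ℂ) (t : ℝ) : (1 - (t:ℂ) * z).im = -(t * z.im) := by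
  simp

lemma mem_slit {z : ℂ} (hz : z.im ≠ 0) (t : ℝ) : 1 - (t:ℂ) * z ∈ Complex.slitPlane := by
  rcases eq_or_ne t 0 with rfl | ht
  · simp [Complex.mem_slitPlane_iff]
  · exact Or.inr (by rw [sub_mul_im]; exact neg_ne_zero.2 (mul_ne_zero ht hz))

lemma sub_ne_zero_of_ne {z : ℂ} (hz : z.im ≠ 0) {t : ℝ} (ht : t ≠ 0) :
    1 - (t:ℂ) * z ≠ 0 := by
  intro h
  have := sub_mul_im z t
  rw [h] at this
  simp only [Complex.zero_im] at this
  exact mul_ne_zero ht hz (by linarith)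

lemma continuous_Phi {z : ℂ} (hz : z.im ≠ 0) : Continuous (Phi z) := by
  rw [continuous_iff_continuousAt]
  intro t
  rcases eq_or_ne t 0 with rfl | ht
  · have h1 : HasDerivAt (fun t : ℝ => 1 - (t:ℂ) * z) (-z) 0 := by
      simpa using (((hasDerivAt_id (0:ℝ)).ofReal_comp).mul_const z).const_sub 1
    have hL : HasDerivAt (fun t : ℝ => Complex.log (1 - (t:ℂ) * z)) (-z) 0 := by
      simpa using h1.clog_real (by simpa using mem_slit hz 0)
    have hslope := hasDerivAt_iff_tendsto_slope.mp hL
    have h3 : Tendsto (Phi z) (nhdsWithin 0 {(0:ℝ)}ᶜ) (nhds (-z)) := by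
      refine hslope.congr' ?_
      filter_upwards [self_mem_nhdsWithin] with u hu
      have hu' : u ≠ 0 := hu
      rw [Phi_of_ne hu']
      simp [slope, Complex.real_smul, div_eq_inv_mul]
    have h4 : Tendsto (Phi z) (nhds (0:ℝ)) (nhds (-z)) := by
      rw [← nhdsNE_sup_pure (0:ℝ)]
      refine Filter.Tendsto.sup h3 ?_
      have : Phi z 0 = -z := if_pos rfl
      simpa [this] using tendsto_pure_nhds (Phi z) 0
    have : Phi z 0 = -z := if_pos rfl
    simpa [ContinuousAt, this] using h4
  · have hc : ContinuousAt (fun t : ℝ => 1 - (t:ℂ) * z) t := by fun_prop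
    have hlog : ContinuousAt (fun u : ℝ => Complex.log (1 - (u:ℂ) * z)) t :=
      ContinuousAt.comp (x := t) (f := fun u : ℝ => 1 - (u:ℂ) * z)
        (continuousAt_clog (mem_slit hz t)) hc
    have : ContinuousAt (fun t : ℝ => Complex.log (1 - (t:ℂ) * z) / (t:ℂ)) t := by
      refine ContinuousAt.div hlog Complex.continuous_ofReal.continuousAt ?_
      exact_mod_cast ht
    refine this.congr ?_
    filter_upwards [isOpen_compl_singleton.mem_nhds ht] with u hu
    exact (Phi_of_ne hu).symm

lemma li2_im {z : ℂ} (hz : z.im ≠ 0) :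
    (Li2 z).im = ∫ t in (0:ℝ)..1, -(Complex.log (1 - (t:ℂ) * z)).im / t := by
  have hae : (fun t : ℝ => -Phi z t) =ᵐ[volume]
      (fun t : ℝ => -Complex.log (1 - (t:ℂ) * z) / (t:ℂ)) := by
    filter_upwards [ae_ne_zero] with t ht
    rw [Phi_of_ne ht, neg_div]
  have hint : IntervalIntegrable (fun t : ℝ => -Complex.log (1 - (t:ℂ) * z) / (t:ℂ))
      volume 0 1 :=
    (((continuous_Phi hz).neg).intervalIntegrable 0 1).congr_ae (ae_restrict_of_ae hae)
  have h := Complex.imCLM.intervalIntegral_comp_comm hint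
  have h2 : (∫ t in (0:ℝ)..1, -Complex.log (1 - (t:ℂ) * z) / (t:ℂ)).im
      = ∫ t in (0:ℝ)..1, (-Complex.log (1 - (t:ℂ) * z) / (t:ℂ)).im := by
    simpa using h.symm
  rw [Li2, h2]
  refine intervalIntegral.integral_congr fun t _ => ?_
  simp [neg_div]

variable (θ : ℝ)

/-- `G r = -Im log(1 - r e^{iθ})`. -/
noncomputable def Gf (r : ℝ) : ℝ :=
  -(Complex.log (1 - (r:ℂ) * Complex.exp ((θ:ℂ) * Complex.I))).im

/-- Continuous version of `G r / r`. -/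
noncomputable def Kf (s : ℝ) : ℝ :=
  -(Phi (Complex.exp ((θ:ℂ) * Complex.I)) s).im

noncomputable def Bf (r : ℝ) : ℝ := ∫ s in (0:ℝ)..r, Kf θ s

lemma E_im : (Complex.exp ((θ:ℂ) * Complex.I)).im = Real.sin θ :=
  Complex.exp_ofReal_mul_I_im θ

variable {θ}

lemma Kf_of_ne {s : ℝ} (hs : s ≠ 0) : Kf θ s = Gf θ s / s := by
  rw [Kf, Phi_of_ne hs, Complex.div_ofReal_im, Gf, neg_div]

section Main

variable (hθ0 : 0 < θ) (hθπ : θ < π)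
include hθ0 hθπ

lemma E_im_pos : 0 < (Complex.exp ((θ:ℂ) * Complex.I)).im := by
  rw [E_im]; exact Real.sin_pos_of_pos_of_lt_pi hθ0 hθπ

lemma w_im_neg {r : ℝ} (hr : 0 < r) :
    (1 - (r:ℂ) * Complex.exp ((θ:ℂ) * Complex.I)).im < 0 := by
  rw [sub_mul_im, E_im]
  have := Real.sin_pos_of_pos_of_lt_pi hθ0 hθπ
  nlinarith

lemma Gf_pos {r : ℝ} (hr : 0 < r) : 0 < Gf θ r := by
  have h := Complex.arg_neg_iff.2 (w_im_neg hθ0 hθπ hr)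
  rw [Gf, Complex.log_im]
  linarith

lemma Gf_add {r : ℝ} (hr : 0 < r) : Gf θ r + Gf θ r⁻¹ = π - θ := by
  set E := Complex.exp ((θ:ℂ) * Complex.I) with hE
  set w : ℂ := 1 - (r:ℂ) * E with hw
  have hwim : w.im < 0 := w_im_neg hθ0 hθπ hr
  have hargw_neg : Complex.arg w < 0 := Complex.arg_neg_iff.2 hwim
  have hargw_gt : -π < Complex.arg w := Complex.neg_pi_lt_arg w
  have hw0 : w ≠ 0 := fun h => by rw [h] at hwim; simp at hwim
  have hEne : -E ≠ 0 := neg_ne_zero.2 (Complex.exp_ne_zero _)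
  have hconjw : (starRingEnd ℂ) w ≠ 0 := by
    simpa using hw0
  have hEconj : E * (starRingEnd ℂ) E = 1 := by
    rw [Complex.mul_conj, Complex.normSq_eq_norm_sq]
    rw [hE, Complex.norm_exp]
    simp
  have hr0 : (r:ℂ) ≠ 0 := Complex.ofReal_ne_zero.mpr hr.ne'
  have hfac : 1 - ((r⁻¹:ℝ):ℂ) * E = ((r⁻¹:ℝ):ℂ) * ((-E) * (starRingEnd ℂ) w) := by
    rw [hw, map_sub, map_one, map_mul, Complex.conj_ofReal, Complex.ofReal_inv]
    have h1 : (-E) * (1 - (r:ℂ) * (starRingEnd ℂ) E) = -E + (r:ℂ) * (E * (starRingEnd ℂ) E) := by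
      ring
    rw [h1, hEconj]
    field_simp
    ring
  have harg_negE : Complex.arg (-E) = θ - π := by
    have h1 : -E = Complex.cos ((θ - π : ℝ) : ℂ) + Complex.sin ((θ - π : ℝ) : ℂ) * Complex.I := by
      rw [hE, ← Complex.ofReal_cos, ← Complex.ofReal_sin]
      apply Complex.ext <;>
        simp [Complex.exp_ofReal_mul_I_re, Complex.exp_ofReal_mul_I_im,
          Complex.cos_ofReal_re, Complex.cos_ofReal_im, Complex.sin_ofReal_re,
          Complex.sin_ofReal_im, Real.cos_sub_pi, Real.sin_sub_pi]
    rw [h1]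
    exact Complex.arg_cos_add_sin_mul_I ⟨by linarith, by linarith [Real.pi_pos]⟩
  have hconj_arg : Complex.arg ((starRingEnd ℂ) w) = -Complex.arg w := by
    rw [Complex.arg_conj, if_neg (by linarith [Real.pi_pos])]
  have hargmul : Complex.arg ((-E) * (starRingEnd ℂ) w)
      = (θ - π) + -Complex.arg w := by
    rw [← harg_negE, ← hconj_arg]
    refine Complex.arg_mul hEne hconjw ?_
    rw [harg_negE, hconj_arg]
    constructor
    · linarith
    · linarith
  have hGr : Gf θ r = -Complex.arg w := by
    rw [Gf, Complex.log_im]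
  have hGrinv : Gf θ r⁻¹ = π - θ + Complex.arg w := by
    rw [Gf, Complex.log_im, hfac, Complex.arg_real_mul _ (inv_pos.2 hr), hargmul]
    ring
  rw [hGr, hGrinv]; ring

lemma Kf_cont : Continuous (Kf θ) :=
  (Complex.continuous_im.comp (continuous_Phi (ne_of_gt (E_im_pos hθ0 hθπ)))).neg

lemma B_hasDeriv (r : ℝ) : HasDerivAt (Bf θ) (Kf θ r) r :=
  integral_hasDerivAt_right ((Kf_cont hθ0 hθπ).intervalIntegrable 0 r)
    ((Kf_cont hθ0 hθπ).stronglyMeasurableAtFilter _ _)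
    (Kf_cont hθ0 hθπ).continuousAt

lemma B_pos {r : ℝ} (hr : 0 < r) : 0 < Bf θ r := by
  refine intervalIntegral_pos_of_pos_on ((Kf_cont hθ0 hθπ).intervalIntegrable 0 r) ?_ hr
  intro s hs
  rw [Kf_of_ne hs.1.ne']
  exact div_pos (Gf_pos hθ0 hθπ hs.1) hs.1

lemma A_eq (x : ℝ) :
    (Li2 (Complex.exp ((x : ℂ) + (θ : ℂ) * Complex.I))).im = Bf θ (Real.exp x) := by
  set E := Complex.exp ((θ:ℂ) * Complex.I) with hE
  set z := Complex.exp ((x : ℂ) + (θ : ℂ) * Complex.I) with hz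
  have hzE : z = ((Real.exp x : ℝ) : ℂ) * E := by
    rw [hz, Complex.exp_add, Complex.ofReal_exp]
  have hzim : z.im = Real.exp x * Real.sin θ := by
    rw [hzE, Complex.im_ofReal_mul, hE, Complex.exp_ofReal_mul_I_im]
  have hzim' : z.im ≠ 0 := by
    rw [hzim]
    exact (mul_pos (Real.exp_pos x) (Real.sin_pos_of_pos_of_lt_pi hθ0 hθπ)).ne'
  rw [li2_im hzim']
  have hstep : (∫ t in (0:ℝ)..1, -(Complex.log (1 - (t:ℂ) * z)).im / t)
      = ∫ t in (0:ℝ)..1, Real.exp x • Kf θ (t * Real.exp x) := by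
    refine intervalIntegral.integral_congr_ae ?_
    filter_upwards [ae_ne_zero] with t ht _
    have hte : t * Real.exp x ≠ 0 := mul_ne_zero ht (Real.exp_ne_zero x)
    have hcast : 1 - (t:ℂ) * z = 1 - ((t * Real.exp x : ℝ) : ℂ) * E := by
      rw [hzE]; push_cast; ring
    rw [hcast, Kf_of_ne hte]
    show -(Complex.log (1 - ((t * Real.exp x : ℝ):ℂ) * E)).im / t
        = Real.exp x • (Gf θ (t * Real.exp x) / (t * Real.exp x))
    rw [Gf, ← hE, smul_eq_mul]
    field_simp
  rw [hstep, intervalIntegral.integral_smul,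
    intervalIntegral.integral_comp_mul_right (fun s => Kf θ s) (Real.exp_ne_zero x)]
  rw [zero_mul, one_mul, smul_smul, mul_inv_cancel₀ (Real.exp_ne_zero x), one_smul, Bf]

lemma key_diff (x : ℝ) :
    Bf θ (Real.exp x) - Bf θ (Real.exp (-x)) = (π - θ) * x := by
  have hF : ∀ y : ℝ, HasDerivAt
      (fun x => Bf θ (Real.exp x) - Bf θ (Real.exp (-x)) - (π - θ) * x) 0 y := by
    intro y
    have h1 : HasDerivAt (fun x => Bf θ (Real.exp x)) (Kf θ (Real.exp y) * Real.exp y) y :=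
      (B_hasDeriv hθ0 hθπ (Real.exp y)).comp y (Real.hasDerivAt_exp y)
    have h2 : HasDerivAt (fun x : ℝ => Real.exp (-x)) (-Real.exp (-y)) y := by
      exact ((Real.hasDerivAt_exp (-y)).comp y (hasDerivAt_neg y)).congr_deriv (by ring)
    have h3 : HasDerivAt (fun x => Bf θ (Real.exp (-x)))
        (Kf θ (Real.exp (-y)) * -Real.exp (-y)) y :=
      HasDerivAt.comp (h₂ := Bf θ) y (B_hasDeriv hθ0 hθπ (Real.exp (-y))) h2
    have h4 : HasDerivAt (fun x : ℝ => (π - θ) * x) (π - θ) y := by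
      simpa using (hasDerivAt_id y).const_mul (π - θ)
    have h5 := (h1.sub h3).sub h4
    have hK1 : Kf θ (Real.exp y) * Real.exp y = Gf θ (Real.exp y) := by
      rw [Kf_of_ne (Real.exp_ne_zero y)]
      field_simp
    have hK2 : Kf θ (Real.exp (-y)) * -Real.exp (-y) = -Gf θ (Real.exp (-y)) := by
      rw [Kf_of_ne (Real.exp_ne_zero (-y))]
      field_simp
    have hadd : Gf θ (Real.exp y) + Gf θ (Real.exp (-y)) = π - θ := by
      have := Gf_add hθ0 hθπ (Real.exp_pos y)
      rwa [← Real.exp_neg] at this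
    exact h5.congr_deriv (by rw [hK1, hK2]; linarith)
  have hconst := is_const_of_deriv_eq_zero
    (fun y => (hF y).differentiableAt) (fun y => (hF y).deriv) x 0
  simp only [neg_zero, Real.exp_zero, mul_zero, sub_zero, sub_self] at hconst
  linarith [hconst]

end Main

end Li2Gt

/-- For every real `x` and every `θ ∈ (0,π)`,
`Im Li₂(e^{x+iθ}) + Im Li₂(e^{-x+iθ}) > (π − θ)·|x|`. -/
theorem im_li2_add_im_li2_gt (x θ : ℝ) (hθ0 : 0 < θ) (hθπ : θ < π) :
    (π - θ) * |x| <
      (Li2 (Complex.exp ((x : ℂ) + (θ : ℂ) * Complex.I))).im +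
      (Li2 (Complex.exp (-(x : ℂ) + (θ : ℂ) * Complex.I))).im := by
  have hA1 := Li2Gt.A_eq hθ0 hθπ x
  have hA2 := Li2Gt.A_eq hθ0 hθπ (-x)
  rw [Complex.ofReal_neg] at hA2
  have hkey := Li2Gt.key_diff hθ0 hθπ x
  have hp1 := Li2Gt.B_pos hθ0 hθπ (Real.exp_pos x)
  have hp2 := Li2Gt.B_pos hθ0 hθπ (Real.exp_pos (-x))
  rw [hA1, hA2]
  rcases abs_cases x with ⟨h, _⟩ | ⟨h, _⟩
  · rw [h]; linarith
  · rw [h, mul_neg]; linarith
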